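/- The reduction map modulo 3 is injective on any finite subgroup of GL_n(ℤ): if A ∈ GL_n(ℤ) has finite order and A ≡ I (mod 3), then A = I. -/

import Mathlib

open Finset Matrix

-- entries of a product
private lemma entry_dvd_mul {n : ℕ} {a b : ℤ} {X Y : Matrix (Fin n) (Fin n) ℤ}
    (hX : ∀ i j, a ∣ X i j) (hY : ∀ i j, b ∣ Y i j) :
    ∀ i j, a * b ∣ (X * Y) i j := by
  intro i j
  rw [Matrix.mul_apply]
  exact Finset.dvd_sum fun k _ => mul_dvd_mul (hX i k) (hY k j)

private lemma entry_dvd_pow {n : ℕ} {a : ℤ} {X : Matrix (Fin n) (Fin n) ℤ}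
    (hX : ∀ i j, a ∣ X i j) : ∀ m : ℕ, 1 ≤ m → ∀ i j, a ^ m ∣ (X ^ m) i j := by
  intro m
  induction m with
  | zero => omega
  | succ t ih =>
    intro _ i j
    cases t with
    | zero => simpa [pow_one] using hX i j
    | succ s =>
      have := entry_dvd_mul (ih (by omega)) hX
      simpa [pow_succ] using this i j

/-- Key step: if `(N+1)^p = 1` with `p` prime and all entries of `N` divisible by `3^k`
(`k ≥ 1`), then all entries are divisible by `3^(k+1)`. -/
private lemma step {n : ℕ} {p : ℕ} (hp : p.Prime) {N : Matrix (Fin n) (Fin n) ℤ}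
    (hpow : (N + 1) ^ p = 1) {k : ℕ} (hk : 1 ≤ k)
    (h : ∀ i j, (3:ℤ) ^ k ∣ N i j) : ∀ i j, (3:ℤ) ^ (k+1) ∣ N i j := by
  have hexp := (Commute.one_right N).add_pow p
  simp only [one_pow, mul_one] at hexp
  rw [hpow] at hexp
  -- 1 = ∑ m in range (p+1), N^m * C(p,m)
  have hp2 : 2 ≤ p := hp.two_le
  rw [Finset.range_eq_Ico,
    Finset.sum_eq_sum_Ico_succ_bot (by omega : 0 < p + 1),
    Finset.sum_eq_sum_Ico_succ_bot (by omega : 1 < p + 1)] at hexp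
  simp only [pow_zero, Nat.choose_zero_right, Nat.cast_one, mul_one, pow_one,
    Nat.choose_one_right] at hexp
  -- hexp : 1 = 1 + N * ↑p + ∑ m in Ico 2 (p+1), N ^ m * ↑(p.choose m)
  have h1 : N * (p : Matrix (Fin n) (Fin n) ℤ)
      + ∑ m ∈ Finset.Ico 2 (p+1), N ^ m * (p.choose m : Matrix (Fin n) (Fin n) ℤ) = 0 := by
    have := left_eq_add.mp hexp
    norm_num at this ⊢
    exact this
  have key := eq_neg_of_add_eq_zero_left h1
  -- entrywise form
  have hent : ∀ i j, N i j * (p:ℤ) =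
      - ∑ m ∈ Finset.Ico 2 (p+1), (N ^ m) i j * (p.choose m : ℤ) := by
    intro i j
    have := congrFun (congrFun key i) j
    simpa [← Matrix.diagonal_natCast, Matrix.mul_diagonal, Matrix.sum_apply,
      Matrix.neg_apply] using this
  by_cases hp3 : p = 3
  · -- p = 3
    subst hp3
    intro i j
    have h2 : (3:ℤ) ^ (2*k) ∣ (N ^ 2) i j := by
      simpa [pow_mul'] using entry_dvd_pow h 2 (by omega) i j
    have h3 : (3:ℤ) ^ (3*k) ∣ (N ^ 3) i j := by
      simpa [pow_mul'] using entry_dvd_pow h 3 (by omega) i j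
    have heq := hent i j
    rw [show Finset.Ico 2 4 = {2, 3} by decide,
      Finset.sum_insert (by decide), Finset.sum_singleton] at heq
    norm_num at heq
    -- heq : N i j * 3 = -((N^2) i j * 3 + (N^3) i j)
    have hdvd : (3:ℤ) ^ (k+2) ∣ N i j * 3 := by
      rw [heq]
      apply dvd_add
      · rw [dvd_neg]
        exact dvd_trans (pow_dvd_pow 3 (by omega : k + 2 ≤ 3*k)) h3
      · rw [dvd_neg]
        calc (3:ℤ) ^ (k+2) ∣ 3 ^ (2*k) * 3 := by
              rw [← pow_succ]; exact pow_dvd_pow 3 (by omega)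
          _ ∣ (N ^ 2) i j * 3 := mul_dvd_mul_right h2 3
    have : (3:ℤ) ^ (k+1) * 3 ∣ N i j * 3 := by rwa [← pow_succ]
    exact (mul_dvd_mul_iff_right (by norm_num : (3:ℤ) ≠ 0)).mp this
  · -- p ≠ 3
    intro i j
    have hdvd : (3:ℤ) ^ (k+1) ∣ N i j * (p:ℤ) := by
      rw [hent i j]
      apply dvd_neg.mpr
      apply Finset.dvd_sum
      intro m hm
      rw [Finset.mem_Ico] at hm
      have : (3:ℤ) ^ (k*m) ∣ (N ^ m) i j := by
        simpa [pow_mul] using entry_dvd_pow h m (by omega) i j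
      exact Dvd.dvd.mul_right
        (dvd_trans (pow_dvd_pow 3 (by nlinarith [hm.1] : k + 1 ≤ k*m)) this) _
    have hcop : IsCoprime ((3:ℤ) ^ (k+1)) (p:ℤ) := by
      apply IsCoprime.pow_left
      rw [Int.isCoprime_iff_gcd_eq_one]
      have : Nat.Coprime 3 p :=
        (Nat.coprime_primes (by norm_num) hp).mpr (fun hc => hp3 hc.symm)
      simpa [Int.gcd] using this
    exact hcop.dvd_of_dvd_mul_right hdvd

private lemma int_eq_zero_of_forall_pow_dvd (x : ℤ) (h : ∀ k : ℕ, (3:ℤ) ^ k ∣ x) :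
    x = 0 := by
  by_contra hx
  have h1 : (3:ℤ) ^ x.natAbs ≤ |x| :=
    Int.le_of_dvd (abs_pos.mpr hx) ((dvd_abs _ _).mpr (h x.natAbs))
  have h2 : (x.natAbs : ℤ) < 3 ^ x.natAbs := by
    exact_mod_cast (Nat.lt_pow_self (by norm_num : 1 < 3) : x.natAbs < 3 ^ x.natAbs)
  rw [Int.abs_eq_natAbs] at h1
  omega

private lemma prime_order_case {n : ℕ} {p : ℕ} (hp : p.Prime)
    {N : Matrix (Fin n) (Fin n) ℤ} (hpow : (N + 1) ^ p = 1)
    (h : ∀ i j, (3:ℤ) ∣ N i j) : N = 0 := by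
  have hall : ∀ k : ℕ, 1 ≤ k → ∀ i j, (3:ℤ) ^ k ∣ N i j := by
    intro k
    induction k with
    | zero => omega
    | succ t ih =>
      intro _
      cases t with
      | zero => simpa using h
      | succ s => exact step hp hpow (by omega) (ih (by omega))
  ext i j
  simp only [Matrix.zero_apply]
  apply int_eq_zero_of_forall_pow_dvd
  intro k
  cases k with
  | zero => simp
  | succ t => exact hall (t+1) (by omega) i j

/-- The reduction map modulo 3 is injective on any finite subgroup of `GL_n(ℤ)`:
if `A ∈ GL_n(ℤ)` has finite order and `A ≡ I (mod 3)`, then `A = I`. -/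
theorem level_three_congruence_torsion_free
    {n : ℕ} (A : Matrix.GeneralLinearGroup (Fin n) ℤ) (hfin : IsOfFinOrder A)
    (hmod : (A : Matrix (Fin n) (Fin n) ℤ).map (Int.cast : ℤ → ZMod 3) = 1) :
    A = 1 := by
  by_contra hA
  set m := orderOf A with hm
  have hm0 : 0 < m := hfin.orderOf_pos
  have hm1 : m ≠ 1 := fun h => hA (orderOf_eq_one_iff.mp h)
  set p := m.minFac with hpdef
  have hp : p.Prime := Nat.minFac_prime hm1
  set B := A ^ (m / p) with hB
  have hBp : B ^ p = 1 := by
    rw [hB, ← pow_mul, Nat.div_mul_cancel (Nat.minFac_dvd m)]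
    exact pow_orderOf_eq_one A
  have hBne : B ≠ 1 := by
    intro hB1
    have hdvd : m ∣ m / p := orderOf_dvd_of_pow_eq_one (hB ▸ hB1)
    have hlt : m / p < m := Nat.div_lt_self hm0 hp.one_lt
    have := Nat.le_of_dvd (Nat.div_pos (Nat.minFac_le hm0) hp.pos) hdvd
    rw [← hpdef] at this
    omega
  -- reduction of B mod 3 is 1
  have hBmod : ((B : Matrix (Fin n) (Fin n) ℤ)).map (Int.cast : ℤ → ZMod 3) = 1 := by
    have : (B : Matrix (Fin n) (Fin n) ℤ) = (A : Matrix (Fin n) (Fin n) ℤ) ^ (m / p) := by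
      rw [hB]; exact Units.val_pow_eq_pow_val A (m / p)
    rw [this]
    have hmap := map_pow ((Int.castRingHom (ZMod 3)).mapMatrix) (A : Matrix (Fin n) (Fin n) ℤ) (m / p)
    simp only [RingHom.mapMatrix_apply] at hmap
    rw [show ((Int.castRingHom (ZMod 3)) : ℤ → ZMod 3) = (Int.cast : ℤ → ZMod 3) from rfl] at hmap
    rw [hmap, hmod, one_pow]
  set N : Matrix (Fin n) (Fin n) ℤ := (B : Matrix (Fin n) (Fin n) ℤ) - 1 with hN
  have hNpow : (N + 1) ^ p = 1 := by
    rw [hN, sub_add_cancel]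
    have := congrArg (Units.val) hBp
    simpa using this
  have hNdvd : ∀ i j, (3:ℤ) ∣ N i j := by
    intro i j
    have := congrFun (congrFun hBmod i) j
    rw [Matrix.map_apply] at this
    have h1 : ((N i j : ℤ) : ZMod 3) = 0 := by
      rw [hN]
      push_cast [Matrix.sub_apply, Matrix.one_apply]
      rw [this]
      by_cases hij : i = j <;> simp [Matrix.one_apply, hij]
    exact (ZMod.intCast_zmod_eq_zero_iff_dvd _ 3).mp h1
  have hN0 : N = 0 := prime_order_case hp hNpow hNdvd
  apply hBne
  apply Units.ext
  have : (B : Matrix (Fin n) (Fin n) ℤ) = 1 := by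
    have := hN0
    rw [hN] at this
    exact sub_eq_zero.mp this
  simpa using this
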